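/- Let A be a commutative unital algebra and Δ ∈ End(A). If Δ is a differential operator of order at most k (in the Grothendieck sense: all (k+1)-fold iterated commutators [···[[Δ,L_{a₀}],L_{a₁}],···,L_{aₖ}] vanish), then the (k+1)-ary higher antibracket (a₁,…,a_{k+1})_Δ is identically zero; conversely, if all (k+1)-ary and higher antibrackets vanish and Δ(1)-corrections are included, then Δ is a differential operator of order at most k. -/

import Mathlib

private lemma foldl_bracket_zero {R A : Type*} [CommRing R] [CommRing A] [Algebra R A]
    (l : List A) :
    List.foldl (fun (D : Module.End R A) (x : A) => ⁅D, LinearMap.mulLeft R x⁆) 0 l = 0 := by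
  induction l with
  | nil => rfl
  | cons a t ih => simpa [LieRing.of_associative_ring_bracket] using ih

/-- `Δ` is a differential operator of Grothendieck order at most `k` (all `(k+1)`-fold
iterated commutators with multiplication operators vanish) if and only if all higher
antibrackets of arity at least `k+1` vanish identically. -/
theorem order_le_iff_antibrackets_vanish {R A : Type*} [CommRing R] [CommRing A] [Algebra R A]
    (Δ : Module.End R A) (k : ℕ) :
    (∀ l : List A, l.length = k + 1 →
        List.foldl (fun (D : Module.End R A) (x : A) => ⁅D, LinearMap.mulLeft R x⁆) Δ l = 0) ↔
    (∀ l : List A, k + 1 ≤ l.length →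
        (List.foldl (fun (D : Module.End R A) (x : A) => ⁅D, LinearMap.mulLeft R x⁆) Δ l) 1
          = 0) := by
  constructor
  · intro h l hl
    have hsplit : l = l.take (k + 1) ++ l.drop (k + 1) := (List.take_append_drop _ _).symm
    rw [hsplit, List.foldl_append, h (l.take (k + 1)) (List.length_take_of_le hl),
      foldl_bracket_zero]
    simp
  · intro h l hl
    set f := fun (D : Module.End R A) (x : A) => ⁅D, LinearMap.mulLeft R x⁆ with hf
    set E := List.foldl f Δ l with hE
    ext b
    have h1 : E 1 = 0 := h l hl.ge
    have h2 : (⁅E, LinearMap.mulLeft R b⁆ : Module.End R A) 1 = 0 := by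
      have := h (l ++ [b]) (by simp [hl])
      simpa [List.foldl_append, hE, hf] using this
    have : E b - b * E 1 = 0 := by
      simpa [LieRing.of_associative_ring_bracket, LinearMap.sub_apply, Module.End.mul_apply,
        LinearMap.mulLeft_apply] using h2
    simp only [LinearMap.zero_apply]
    rw [h1, mul_zero, sub_zero] at this
    exact this
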